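/- For every n ≥ 0, the number of walks of length n on the square lattice (steps (1,0), (−1,0), (0,1), (0,−1)) that start at (0,0) and stay in the quadrant x ≥ 0, y ≥ 0 equals C(n, ⌊n/2⌋) · C(n+1, ⌈n/2⌉), and also equals ∑_{m=0}^{n} C(n,m) · C(m, ⌊m/2⌋) · C(n−m, ⌊(n−m)/2⌋), where C(a,b) denotes the binomial coefficient. -/

import Mathlib

/-- The number of `n`-step walks on the square lattice (steps N, E, S, W) starting at the
origin and confined to the quadrant `x ≥ 0, y ≥ 0`. -/
noncomputable def squareQuadrantCount (n : ℕ) : ℕ :=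
  Nat.card {w : Fin (n + 1) → ℤ × ℤ //
    w 0 = (0, 0) ∧
    (∀ k : Fin n, w k.succ - w k.castSucc ∈
      ({(1, 0), (-1, 0), (0, 1), (0, -1)} : Set (ℤ × ℤ))) ∧
    ∀ k, 0 ≤ (w k).1 ∧ 0 ≤ (w k).2}

open Finset

namespace SQW

def stepv : Fin 4 → ℤ × ℤ := ![(1,0), (-1,0), (0,1), (0,-1)]
def stepb (b : Bool) : ℤ := if b then 1 else -1

def psum2 {n : ℕ} (s : Fin n → Fin 4) (k : ℕ) : ℤ × ℤ :=
  ∑ i : Fin n, if (i : ℕ) < k then stepv (s i) else 0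

def psum1 {n : ℕ} (s : Fin n → Bool) (k : ℕ) : ℤ :=
  ∑ i : Fin n, if (i : ℕ) < k then stepb (s i) else 0

def good2 {n : ℕ} (s : Fin n → Fin 4) : Prop :=
  ∀ k, k ≤ n → 0 ≤ (psum2 s k).1 ∧ 0 ≤ (psum2 s k).2

def good1 {n : ℕ} (s : Fin n → Bool) : Prop := ∀ k, k ≤ n → 0 ≤ psum1 s k

@[simp] lemma psum2_zero {n : ℕ} (s : Fin n → Fin 4) : psum2 s 0 = 0 := by
  simp [psum2]

@[simp] lemma psum1_zero {n : ℕ} (s : Fin n → Bool) : psum1 s 0 = 0 := by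
  simp [psum1]

lemma psum2_succ {n : ℕ} (s : Fin n → Fin 4) {k : ℕ} (hk : k < n) :
    psum2 s (k + 1) = psum2 s k + stepv (s ⟨k, hk⟩) := by
  unfold psum2
  have h : ∀ i : Fin n, (if (i : ℕ) < k + 1 then stepv (s i) else 0)
      = (if (i : ℕ) < k then stepv (s i) else 0)
        + (if i = ⟨k, hk⟩ then stepv (s i) else 0) := by
    intro i
    rcases lt_trichotomy (i : ℕ) k with h | h | h
    · rw [if_pos (by omega), if_pos h, if_neg (by simp only [Fin.ext_iff]; omega)]
      simp
    · rw [if_pos (by omega), if_neg (by omega), if_pos (by ext; simpa using h)]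
      simp
    · rw [if_neg (by omega), if_neg (by omega), if_neg (by simp only [Fin.ext_iff]; omega)]
      simp
  rw [Finset.sum_congr rfl (fun i _ => h i), Finset.sum_add_distrib,
    Finset.sum_ite_eq' Finset.univ (⟨k, hk⟩ : Fin n)]
  simp

lemma psum1_succ {n : ℕ} (s : Fin n → Bool) {k : ℕ} (hk : k < n) :
    psum1 s (k + 1) = psum1 s k + stepb (s ⟨k, hk⟩) := by
  unfold psum1
  have h : ∀ i : Fin n, (if (i : ℕ) < k + 1 then stepb (s i) else 0)
      = (if (i : ℕ) < k then stepb (s i) else 0)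
        + (if i = ⟨k, hk⟩ then stepb (s i) else 0) := by
    intro i
    rcases lt_trichotomy (i : ℕ) k with h | h | h
    · rw [if_pos (by omega), if_pos h, if_neg (by simp only [Fin.ext_iff]; omega)]
      simp
    · rw [if_pos (by omega), if_neg (by omega), if_pos (by ext; simpa using h)]
      simp
    · rw [if_neg (by omega), if_neg (by omega), if_neg (by simp only [Fin.ext_iff]; omega)]
      simp
  rw [Finset.sum_congr rfl (fun i _ => h i), Finset.sum_add_distrib,
    Finset.sum_ite_eq' Finset.univ (⟨k, hk⟩ : Fin n)]
  simp

lemma psum2_snoc {n : ℕ} (s : Fin n → Fin 4) (t : Fin 4) (k : ℕ) :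
    psum2 (Fin.snoc s t) k = psum2 s k + (if n < k then stepv t else 0) := by
  unfold psum2
  rw [Fin.sum_univ_castSucc]
  simp [Fin.snoc_castSucc, Fin.snoc_last]

lemma psum1_snoc {n : ℕ} (s : Fin n → Bool) (t : Bool) (k : ℕ) :
    psum1 (Fin.snoc s t) k = psum1 s k + (if n < k then stepb t else 0) := by
  unfold psum1
  rw [Fin.sum_univ_castSucc]
  simp [Fin.snoc_castSucc, Fin.snoc_last]


lemma psum1_stable {m : ℕ} (s : Fin m → Bool) {k : ℕ} (hk : m ≤ k) :
    psum1 s k = psum1 s m := by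
  unfold psum1
  exact Finset.sum_congr rfl fun i _ => by rw [if_pos (by omega), if_pos i.isLt]

lemma psum2_stable {m : ℕ} (s : Fin m → Fin 4) {k : ℕ} (hk : m ≤ k) :
    psum2 s k = psum2 s m := by
  unfold psum2
  exact Finset.sum_congr rfl fun i _ => by rw [if_pos (by omega), if_pos i.isLt]

noncomputable def Qc (n : ℕ) (p : ℤ × ℤ) : ℕ :=
  Nat.card {s : Fin n → Fin 4 // good2 s ∧ psum2 s n = p}

noncomputable def Nc (m : ℕ) (z : ℤ) : ℕ :=
  Nat.card {s : Fin m → Bool // good1 s ∧ psum1 s m = z}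

noncomputable def Tot (n : ℕ) : ℕ := Nat.card {s : Fin n → Fin 4 // good2 s}

noncomputable def b1 (m : ℕ) : ℕ := Nat.card {s : Fin m → Bool // good1 s}

lemma nat_card_sigma {γ : Type*} [Fintype γ] (F : γ → Type*) [∀ t, Finite (F t)] :
    Nat.card (Σ t, F t) = ∑ t, Nat.card (F t) := by
  classical
  letI : ∀ t, Fintype (F t) := fun t => Fintype.ofFinite (F t)
  rw [Nat.card_eq_fintype_card, Fintype.card_sigma]
  exact Finset.sum_congr rfl fun t _ => (Nat.card_eq_fintype_card).symm

lemma card_fiber_split {α γ : Type*} [Finite α] [Fintype γ] (p : α → Prop) (f : α → γ) :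
    Nat.card {x : α // p x} = ∑ t : γ, Nat.card {x : α // p x ∧ f x = t} := by
  classical
  rw [Nat.card_congr (Equiv.sigmaFiberEquiv (fun y : {x : α // p x} => f y.1)).symm,
    nat_card_sigma]
  exact Finset.sum_congr rfl fun t _ =>
    Nat.card_congr (Equiv.subtypeSubtypeEquivSubtypeInter p (fun x => f x = t))

lemma Nc_zero (z : ℤ) : Nc 0 z = if z = 0 then 1 else 0 := by
  split_ifs with h
  · subst h
    rw [Nc, Nat.card_eq_one_iff_unique]
    refine ⟨⟨fun a b => Subtype.ext (funext fun i => i.elim0)⟩,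
      ⟨⟨fun i => i.elim0, fun k hk => by simp [psum1], by simp [psum1]⟩⟩⟩
  · rw [Nc, Nat.card_eq_zero]
    left
    exact ⟨fun s => h (by simpa using s.2.2.symm)⟩

lemma Nc_neg {m : ℕ} {z : ℤ} (hz : z < 0) : Nc m z = 0 := by
  rw [Nc, Nat.card_eq_zero]
  left
  refine ⟨fun s => ?_⟩
  have := s.2.1 m le_rfl
  rw [s.2.2] at this
  omega

lemma psum1_le {m : ℕ} (s : Fin m → Bool) (k : ℕ) : psum1 s k ≤ m := by
  calc psum1 s k ≤ ∑ _i : Fin m, (1 : ℤ) := by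
        refine Finset.sum_le_sum fun i _ => ?_
        split_ifs
        · cases s i <;> simp [stepb]
        · simp
    _ = m := by simp

lemma Nc_gt {m : ℕ} {z : ℤ} (hz : (m : ℤ) < z) : Nc m z = 0 := by
  rw [Nc, Nat.card_eq_zero]
  left
  refine ⟨fun s => ?_⟩
  have := psum1_le s.1 m
  rw [s.2.2] at this
  omega

lemma good1_snoc {m : ℕ} (s : Fin m → Bool) (t : Bool) :
    good1 (Fin.snoc s t) ↔ good1 s ∧ 0 ≤ psum1 s m + stepb t := by
  constructor
  · intro h
    refine ⟨fun k hk => ?_, ?_⟩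
    · have := h k (by omega)
      rwa [psum1_snoc, if_neg (by omega), add_zero] at this
    · have := h (m + 1) le_rfl
      rwa [psum1_snoc, if_pos (by omega), psum1_stable s (by omega)] at this
  · rintro ⟨h1, h2⟩ k hk
    rw [psum1_snoc]
    by_cases hk' : m < k
    · rw [if_pos hk', psum1_stable s (by omega)]
      exact h2
    · rw [if_neg hk', add_zero]
      exact h1 k (by omega)

def nEquivT (m : ℕ) (z : ℤ) (hz : 0 ≤ z) (t : Bool) :
    {s : Fin (m+1) → Bool // (good1 s ∧ psum1 s (m+1) = z) ∧ s (Fin.last m) = t} ≃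
      {s : Fin m → Bool // good1 s ∧ psum1 s m = z - stepb t} where
  toFun s := ⟨Fin.init s.1, by
    obtain ⟨⟨hg, hp⟩, hl⟩ := s.2
    have hs : Fin.snoc (Fin.init s.1) (s.1 (Fin.last m)) = s.1 := Fin.snoc_init_self s.1
    rw [← hs, good1_snoc] at hg
    rw [← hs, psum1_snoc, if_pos (by omega), psum1_stable _ (by omega), hl] at hp
    exact ⟨hg.1, by omega⟩⟩
  invFun s := ⟨Fin.snoc s.1 t, by
    obtain ⟨hg, hp⟩ := s.2
    refine ⟨⟨(good1_snoc _ _).2 ⟨hg, by rw [hp]; omega⟩, ?_⟩, by simp⟩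
    rw [psum1_snoc, if_pos (by omega), psum1_stable _ (by omega), hp]
    ring⟩
  left_inv s := by
    refine Subtype.ext ?_
    have := Fin.snoc_init_self s.1
    rw [s.2.2] at this
    exact this
  right_inv s := Subtype.ext (by simp)

lemma Nc_succ (m : ℕ) {z : ℤ} (hz : 0 ≤ z) :
    Nc (m + 1) z = Nc m (z - 1) + Nc m (z + 1) := by
  rw [Nc, card_fiber_split _ (fun s => s (Fin.last m)), Fintype.sum_bool]
  rw [Nat.card_congr (nEquivT m z hz true), Nat.card_congr (nEquivT m z hz false)]
  simp [Nc, stepb, sub_neg_eq_add]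

lemma Qc_zero (p : ℤ × ℤ) : Qc 0 p = if p = 0 then 1 else 0 := by
  split_ifs with h
  · subst h
    rw [Qc, Nat.card_eq_one_iff_unique]
    refine ⟨⟨fun a b => Subtype.ext (funext fun i => i.elim0)⟩,
      ⟨⟨fun i => i.elim0, fun k hk => by simp [psum2], by simp [psum2]⟩⟩⟩
  · rw [Qc, Nat.card_eq_zero]
    left
    exact ⟨fun s => h (by simpa using s.2.2.symm)⟩

lemma Qc_bad {n : ℕ} {p : ℤ × ℤ} (hp : p.1 < 0 ∨ p.2 < 0) : Qc n p = 0 := by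
  rw [Qc, Nat.card_eq_zero]
  left
  refine ⟨fun s => ?_⟩
  have := s.2.1 n le_rfl
  rw [s.2.2] at this
  rcases hp with hp | hp <;> omega

lemma good2_snoc {n : ℕ} (s : Fin n → Fin 4) (t : Fin 4) :
    good2 (Fin.snoc s t) ↔
      good2 s ∧ (0 ≤ (psum2 s n + stepv t).1 ∧ 0 ≤ (psum2 s n + stepv t).2) := by
  constructor
  · intro h
    refine ⟨fun k hk => ?_, ?_⟩
    · have := h k (by omega)
      rwa [psum2_snoc, if_neg (by omega), add_zero] at this
    · have := h (n + 1) le_rfl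
      rwa [psum2_snoc, if_pos (by omega), psum2_stable s (by omega)] at this
  · rintro ⟨h1, h2⟩ k hk
    rw [psum2_snoc]
    by_cases hk' : n < k
    · rw [if_pos hk', psum2_stable s (by omega)]
      exact h2
    · rw [if_neg hk', add_zero]
      exact h1 k (by omega)

def qEquivT (n : ℕ) (p : ℤ × ℤ) (hp1 : 0 ≤ p.1) (hp2 : 0 ≤ p.2) (t : Fin 4) :
    {s : Fin (n+1) → Fin 4 // (good2 s ∧ psum2 s (n+1) = p) ∧ s (Fin.last n) = t} ≃
      {s : Fin n → Fin 4 // good2 s ∧ psum2 s n = p - stepv t} where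
  toFun s := ⟨Fin.init s.1, by
    obtain ⟨⟨hg, hp⟩, hl⟩ := s.2
    have hs : Fin.snoc (Fin.init s.1) (s.1 (Fin.last n)) = s.1 := Fin.snoc_init_self s.1
    rw [← hs, good2_snoc] at hg
    rw [← hs, psum2_snoc, if_pos (by omega), psum2_stable _ (by omega), hl] at hp
    exact ⟨hg.1, eq_sub_of_add_eq hp⟩⟩
  invFun s := ⟨Fin.snoc s.1 t, by
    obtain ⟨hg, hp⟩ := s.2
    refine ⟨⟨(good2_snoc _ _).2 ⟨hg, by rw [hp]; constructor <;> simpa⟩, ?_⟩, by simp⟩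
    rw [psum2_snoc, if_pos (by omega), psum2_stable _ (by omega), hp]
    ring⟩
  left_inv s := by
    refine Subtype.ext ?_
    have := Fin.snoc_init_self s.1
    rw [s.2.2] at this
    exact this
  right_inv s := Subtype.ext (by simp)

lemma Qc_succ (n : ℕ) (x y : ℤ) (hx : 0 ≤ x) (hy : 0 ≤ y) :
    Qc (n + 1) (x, y) =
      Qc n (x - 1, y) + Qc n (x + 1, y) + Qc n (x, y - 1) + Qc n (x, y + 1) := by
  rw [Qc, card_fiber_split _ (fun s => s (Fin.last n)), Fin.sum_univ_four]
  rw [Nat.card_congr (qEquivT n (x, y) hx hy 0), Nat.card_congr (qEquivT n (x, y) hx hy 1),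
    Nat.card_congr (qEquivT n (x, y) hx hy 2), Nat.card_congr (qEquivT n (x, y) hx hy 3)]
  have e0 : (x, y) - stepv 0 = (x - 1, y) := by simp [stepv, Prod.ext_iff]
  have e1 : (x, y) - stepv 1 = (x + 1, y) := by simp [stepv, Prod.ext_iff]
  have e2 : (x, y) - stepv 2 = (x, y - 1) := by simp [stepv, Prod.ext_iff]
  have e3 : (x, y) - stepv 3 = (x, y + 1) := by simp [stepv, Prod.ext_iff]
  rw [e0, e1, e2, e3]
  rfl

lemma Qc_conv (n : ℕ) : ∀ x y : ℤ,
    Qc n (x, y) = ∑ m ∈ Finset.range (n + 1), n.choose m * (Nc m x * Nc (n - m) y) := by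
  induction n with
  | zero =>
    intro x y
    rw [Finset.sum_range_one, Nc_zero, Nc_zero, Qc_zero]
    by_cases hx : x = 0 <;> by_cases hy : y = 0 <;> simp [hx, hy, Prod.ext_iff]
  | succ n ih =>
    intro x y
    by_cases hx : 0 ≤ x; swap
    · rw [Qc_bad (by left; simpa using by omega : (x, y).1 < 0 ∨ (x, y).2 < 0)]
      exact (Finset.sum_eq_zero fun m _ => by rw [Nc_neg (by omega)]; ring).symm
    by_cases hy : 0 ≤ y; swap
    · rw [Qc_bad (by right; simpa using by omega : (x, y).1 < 0 ∨ (x, y).2 < 0)]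
      exact (Finset.sum_eq_zero fun m _ => by rw [Nc_neg (m := n + 1 - m) (by omega)]; ring).symm
    rw [Qc_succ n x y hx hy, ih (x-1) y, ih (x+1) y, ih x (y-1), ih x (y+1)]
    symm
    calc ∑ m ∈ Finset.range (n+2), (n+1).choose m * (Nc m x * Nc (n+1-m) y)
        = ∑ i ∈ Finset.range (n+1), (n+1).choose (i+1) * (Nc (i+1) x * Nc (n-i) y)
            + (n+1).choose 0 * (Nc 0 x * Nc (n+1) y) := by
          rw [Finset.sum_range_succ']
          simp only [Nat.succ_sub_succ_eq_sub, Nat.sub_zero]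
      _ = (∑ i ∈ Finset.range (n+1), n.choose i * (Nc (i+1) x * Nc (n-i) y))
            + ((∑ i ∈ Finset.range (n+1), n.choose (i+1) * (Nc (i+1) x * Nc (n-i) y))
               + n.choose 0 * (Nc 0 x * Nc (n+1) y)) := by
          simp only [Nat.choose_succ_succ, add_mul, Nat.choose_zero_right]
          rw [Finset.sum_add_distrib]
          simp [Nat.choose_zero_right]
          ring
      _ = (∑ i ∈ Finset.range (n+1), n.choose i * (Nc (i+1) x * Nc (n-i) y))
            + (∑ m ∈ Finset.range (n+2), n.choose m * (Nc m x * Nc (n+1-m) y)) := by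
          rw [Finset.sum_range_succ' (fun m => n.choose m * (Nc m x * Nc (n+1-m) y)) (n+1)]
          simp only [Nat.succ_sub_succ_eq_sub, Nat.sub_zero]
      _ = (∑ i ∈ Finset.range (n+1), n.choose i * (Nc (i+1) x * Nc (n-i) y))
            + (∑ m ∈ Finset.range (n+1), n.choose m * (Nc m x * Nc (n+1-m) y)) := by
          refine congrArg₂ (· + ·) rfl ?_
          rw [Finset.sum_range_succ]
          simp [Nat.choose_succ_self]
      _ = (∑ i ∈ Finset.range (n+1), (n.choose i * (Nc i (x-1) * Nc (n-i) y)
             + n.choose i * (Nc i (x+1) * Nc (n-i) y)))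
            + (∑ m ∈ Finset.range (n+1), (n.choose m * (Nc m x * Nc (n-m) (y-1))
             + n.choose m * (Nc m x * Nc (n-m) (y+1)))) := by
          refine congrArg₂ (· + ·) (Finset.sum_congr rfl fun i _ => ?_)
            (Finset.sum_congr rfl fun m hm => ?_)
          · rw [Nc_succ i hx]; ring
          · rw [show n+1-m = (n-m)+1 by
              have := Finset.mem_range.1 hm; omega, Nc_succ _ hy]
            ring
      _ = ∑ m ∈ Finset.range (n+1), n.choose m * (Nc m (x-1) * Nc (n-m) y)
          + ∑ m ∈ Finset.range (n+1), n.choose m * (Nc m (x+1) * Nc (n-m) y)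
          + ∑ m ∈ Finset.range (n+1), n.choose m * (Nc m x * Nc (n-m) (y-1))
          + ∑ m ∈ Finset.range (n+1), n.choose m * (Nc m x * Nc (n-m) (y+1)) := by
          rw [Finset.sum_add_distrib, Finset.sum_add_distrib]
          ring

lemma stepv_bounds : ∀ t : Fin 4, (stepv t).1 ≤ 1 ∧ (stepv t).2 ≤ 1 := by decide

lemma psum2_le {n : ℕ} (s : Fin n → Fin 4) (k : ℕ) :
    (psum2 s k).1 ≤ n ∧ (psum2 s k).2 ≤ n := by
  constructor
  · calc (psum2 s k).1 = ∑ i : Fin n, (if (i : ℕ) < k then stepv (s i) else 0).1 :=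
          Prod.fst_sum
      _ ≤ ∑ _i : Fin n, (1 : ℤ) := by
          refine Finset.sum_le_sum fun i _ => ?_
          split_ifs
          · exact (stepv_bounds (s i)).1
          · simp
      _ = n := by simp
  · calc (psum2 s k).2 = ∑ i : Fin n, (if (i : ℕ) < k then stepv (s i) else 0).2 :=
          Prod.snd_sum
      _ ≤ ∑ _i : Fin n, (1 : ℤ) := by
          refine Finset.sum_le_sum fun i _ => ?_
          split_ifs
          · exact (stepv_bounds (s i)).2
          · simp
      _ = n := by simp

lemma fin_min_eq {n : ℕ} (a : ℤ) (x : Fin (n+1)) (h0 : 0 ≤ a) (h1 : a ≤ n) :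
    (⟨min a.toNat n, by omega⟩ : Fin (n+1)) = x ↔ a = ((x : ℕ) : ℤ) := by
  rw [Fin.ext_iff]
  simp only [Fin.val_mk]
  constructor <;> intro h <;> omega

lemma Tot_eq (n : ℕ) :
    Tot n = ∑ x ∈ Finset.range (n+1), ∑ y ∈ Finset.range (n+1), Qc n ((x : ℤ), (y : ℤ)) := by
  classical
  rw [Tot, card_fiber_split good2 (fun s => ((⟨min ((psum2 s n).1.toNat) n, by omega⟩ : Fin (n+1)),
    (⟨min ((psum2 s n).2.toNat) n, by omega⟩ : Fin (n+1))))]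
  rw [Fintype.sum_prod_type]
  rw [← Fin.sum_univ_eq_sum_range (fun x => ∑ y ∈ Finset.range (n+1), Qc n ((x : ℤ), (y : ℤ)))]
  refine Finset.sum_congr rfl fun x _ => ?_
  rw [← Fin.sum_univ_eq_sum_range (fun y => Qc n ((x : ℤ), (y : ℤ)))]
  refine Finset.sum_congr rfl fun y _ => ?_
  rw [Qc]
  refine Nat.card_congr (Equiv.subtypeEquivRight fun s => and_congr_right fun hg => ?_)
  obtain ⟨h0x, h0y⟩ := hg n le_rfl
  obtain ⟨h1x, h1y⟩ := psum2_le s n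
  rw [Prod.ext_iff, Prod.ext_iff]
  simp only [Prod.fst, Prod.snd]
  exact and_congr (fin_min_eq _ x h0x h1x) (fin_min_eq _ y h0y h1y)

lemma b1_eq (m : ℕ) : b1 m = ∑ k ∈ Finset.range (m+1), Nc m (k : ℤ) := by
  classical
  rw [b1, card_fiber_split good1 (fun s => (⟨min ((psum1 s m).toNat) m, by omega⟩ : Fin (m+1)))]
  rw [← Fin.sum_univ_eq_sum_range (fun k => Nc m (k : ℤ))]
  refine Finset.sum_congr rfl fun k _ => ?_
  rw [Nc]
  refine Nat.card_congr (Equiv.subtypeEquivRight fun s => and_congr_right fun hg => ?_)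
  exact fin_min_eq _ k (hg m le_rfl) (psum1_le s m)

lemma sum_Nc_eq {m n : ℕ} (h : m ≤ n) : ∑ k ∈ Finset.range (n+1), Nc m (k : ℤ) = b1 m := by
  rw [b1_eq]
  symm
  refine Finset.sum_subset (by intro x hx; simp only [Finset.mem_range] at hx ⊢; omega) fun k hk hk' => ?_
  simp only [Finset.mem_range] at hk hk'
  exact Nc_gt (by exact_mod_cast by omega)

lemma Tot_conv (n : ℕ) :
    Tot n = ∑ m ∈ Finset.range (n+1), n.choose m * (b1 m * b1 (n - m)) := by
  rw [Tot_eq]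
  have h1 : ∀ x : ℕ, ∑ y ∈ Finset.range (n+1), Qc n ((x : ℤ), (y : ℤ)) =
      ∑ m ∈ Finset.range (n+1), ∑ y ∈ Finset.range (n+1),
        n.choose m * (Nc m (x : ℤ) * Nc (n - m) (y : ℤ)) := by
    intro x
    rw [Finset.sum_comm]
    exact Finset.sum_congr rfl fun y _ => Qc_conv n x y
  rw [Finset.sum_congr rfl fun x _ => h1 x, Finset.sum_comm]
  refine Finset.sum_congr rfl fun m hm => ?_
  have hm' : m ≤ n := by simp only [Finset.mem_range] at hm; omega
  calc ∑ x ∈ Finset.range (n+1), ∑ y ∈ Finset.range (n+1),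
        n.choose m * (Nc m (x : ℤ) * Nc (n - m) (y : ℤ))
      = n.choose m * ((∑ x ∈ Finset.range (n+1), Nc m (x : ℤ)) *
          (∑ y ∈ Finset.range (n+1), Nc (n - m) (y : ℤ))) := by
        rw [Finset.sum_mul_sum]
        rw [Finset.mul_sum]
        refine Finset.sum_congr rfl fun x _ => ?_
        rw [Finset.mul_sum]
    _ = n.choose m * (b1 m * b1 (n - m)) := by
        rw [sum_Nc_eq hm', sum_Nc_eq (by omega)]

lemma Nc_form : ∀ m k : ℕ, (Nc m (k : ℤ) : ℤ) =
    if k ≤ m ∧ (m + k) % 2 = 0 then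
      ((m.choose ((m+k)/2) : ℤ) - (m.choose ((m+k)/2 + 1) : ℤ)) else 0 := by
  intro m
  induction m with
  | zero =>
    intro k
    match k with
    | 0 => simp [Nc_zero]
    | k + 1 =>
      rw [show (((k+1 : ℕ)) : ℤ) = (k : ℤ) + 1 by push_cast; ring, Nc_zero]
      rw [if_neg (by omega), if_neg (by omega)]
      simp
  | succ m ih =>
    intro k
    match k with
    | 0 =>
      have h := Nc_succ m (le_refl (0 : ℤ))
      rw [show (0:ℤ) - 1 = (-1 : ℤ) by ring] at h
      rw [show ((0:ℕ):ℤ) = (0:ℤ) by simp, h, Nc_neg (by omega), Nat.cast_add]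
      rw [show (0:ℤ) + 1 = ((1:ℕ):ℤ) by simp, ih 1]
      by_cases hm : (m + 1) % 2 = 0
      · -- m odd
        rw [if_pos (by omega), if_pos (by omega)]
        have h1 : 1 ≤ m := by omega
        set j := (m+1)/2 with hj
        have hj1 : 1 ≤ j := by omega
        have p1 : (m+1).choose j = m.choose (j-1) + m.choose j := by
          rw [show j = (j-1)+1 by omega, Nat.choose_succ_succ]
          congr 1 <;> congr 1 <;> omega
        have p2 : (m+1).choose (j+1) = m.choose j + m.choose (j+1) := Nat.choose_succ_succ m j
        have sym : m.choose (j-1) = m.choose j := by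
          conv_rhs => rw [show j = m - (j-1) by omega]
          rw [Nat.choose_symm (by omega)]
        push_cast [p1, p2, sym]
        ring
      · -- m even: both sides 0
        rw [if_neg (by omega), if_neg (by omega)]
        simp
    | k + 1 =>
      have h := Nc_succ m (show (0:ℤ) ≤ ((k+1 : ℕ) : ℤ) by positivity)
      rw [show ((k+1:ℕ):ℤ) - 1 = ((k:ℕ):ℤ) by push_cast; ring,
        show ((k+1:ℕ):ℤ) + 1 = ((k+2:ℕ):ℤ) by push_cast; ring] at h
      rw [h, Nat.cast_add, ih k, ih (k+2)]
      by_cases hp : (m + k) % 2 = 0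
      swap
      · rw [if_neg (by omega), if_neg (by omega), if_neg (by omega)]
        simp
      by_cases hk : k + 1 ≤ m + 1
      swap
      · rw [if_neg (by omega), if_neg (by omega), if_neg (by omega)]
        simp
      rw [if_pos (by omega)]
      set u := (m+k)/2 + 1 with hu
      have e1 : (m+1+(k+1))/2 = u := by omega
      rw [e1]
      by_cases hk2 : k + 2 ≤ m
      · rw [if_pos (by omega), if_pos (by omega)]
        have e2 : (m+k)/2 = u - 1 := by omega
        have e3 : (m+(k+2))/2 = u := by omega
        rw [e2, e3]
        have p1 : (m+1).choose u = m.choose (u-1) + m.choose u := by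
          rw [show u = (u-1)+1 by omega, Nat.choose_succ_succ]
          congr 1 <;> congr 1 <;> omega
        have p2 : (m+1).choose (u+1) = m.choose u + m.choose (u+1) := Nat.choose_succ_succ m u
        have e4 : u - 1 + 1 = u := by omega
        push_cast [p1, p2, e4]
        ring
      · -- parity forces k = m
        have hkm : k = m := by omega
        subst hkm
        rw [if_neg (show ¬(k + 2 ≤ k ∧ (k + (k + 2)) % 2 = 0) by omega),
          if_pos (show k + 1 ≤ k + 1 ∧ (k + 1 + (k + 1)) % 2 = 0 by omega)]
        have e2 : (k+k)/2 = k := by omega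
        have e5 : u = k + 1 := by omega
        rw [e2, e5]
        rw [Nat.choose_self, Nat.choose_eq_zero_of_lt (show k < k + 1 by omega),
          Nat.choose_self, Nat.choose_eq_zero_of_lt (show k + 1 < k + 1 + 1 by omega)]
        simp

lemma sum_range_even_odd {M : Type*} [AddCommMonoid M] (g : ℕ → M) (K : ℕ) :
    ∑ i ∈ Finset.range (2*K), g i = ∑ a ∈ Finset.range K, (g (2*a) + g (2*a+1)) := by
  induction K with
  | zero => simp
  | succ K ih =>
    rw [show 2*(K+1) = (2*K)+1+1 by omega, Finset.sum_range_succ, Finset.sum_range_succ,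
      Finset.sum_range_succ, ih]
    rw [add_assoc]

lemma tele (h : ℕ → ℤ) (T : ℕ) : ∑ a ∈ Finset.range T, (h a - h (a+1)) = h 0 - h T := by
  induction T with
  | zero => simp
  | succ T ih => rw [Finset.sum_range_succ, ih]; ring

lemma b1_closed (m : ℕ) : b1 m = m.choose ((m+1)/2) := by
  have main : (b1 m : ℤ) = (m.choose ((m+1)/2) : ℤ) := by
    rw [b1_eq, Nat.cast_sum]
    rcases Nat.even_or_odd m with hE | hO
    · obtain ⟨M, h2⟩ : ∃ M, m = 2*M := by rcases hE with ⟨r, hr⟩; exact ⟨r, by omega⟩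
      subst h2
      rw [Finset.sum_range_succ, sum_range_even_odd]
      have e1 : ∀ a, a ∈ Finset.range (M+1) →
          ((Nc (2*M) ((2*a : ℕ) : ℤ) : ℤ)) =
            (((2*M).choose (M+a) : ℤ) - ((2*M).choose (M+(a+1)) : ℤ)) := by
        intro a ha
        have haM : a < M + 1 := Finset.mem_range.1 ha
        rw [Nc_form, if_pos (show 2*a ≤ 2*M ∧ (2*M + 2*a) % 2 = 0 by omega),
          show (2*M + 2*a)/2 = M + a by omega, show M + a + 1 = M + (a+1) by omega]
      have e2 : ∀ a, a ∈ Finset.range M → ((Nc (2*M) ((2*a+1 : ℕ) : ℤ) : ℤ)) = 0 := by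
        intro a ha
        rw [Nc_form, if_neg (show ¬(2*a+1 ≤ 2*M ∧ (2*M + (2*a+1)) % 2 = 0) by omega)]
      calc (∑ a ∈ Finset.range M, ((Nc (2*M) ((2*a : ℕ) : ℤ) : ℤ)
              + (Nc (2*M) ((2*a+1 : ℕ) : ℤ) : ℤ)))
            + (Nc (2*M) ((2*M : ℕ) : ℤ) : ℤ)
          = ∑ a ∈ Finset.range (M+1), ((Nc (2*M) ((2*a : ℕ) : ℤ) : ℤ)) := by
            rw [Finset.sum_range_succ]
            refine congrArg₂ (· + ·) (Finset.sum_congr rfl fun a ha => ?_) rfl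
            rw [e2 a ha, add_zero]
        _ = ∑ a ∈ Finset.range (M+1),
              (((2*M).choose (M+a) : ℤ) - ((2*M).choose (M+(a+1)) : ℤ)) :=
            Finset.sum_congr rfl e1
        _ = ((2*M).choose (M+0) : ℤ) - ((2*M).choose (M+(M+1)) : ℤ) :=
            tele (fun a => ((2*M).choose (M+a) : ℤ)) (M+1)
        _ = ((2*M).choose ((2*M+1)/2) : ℤ) := by
            rw [show M + (M+1) = 2*M+1 by omega, Nat.choose_succ_self,
              show M + 0 = (2*M+1)/2 by omega]
            simp
    · obtain ⟨M, h2⟩ : ∃ M, m = 2*M+1 := by rcases hO with ⟨r, hr⟩; exact ⟨r, by omega⟩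
      subst h2
      rw [show 2*M+1+1 = 2*(M+1) by omega, sum_range_even_odd]
      have e1 : ∀ a, a ∈ Finset.range (M+1) →
          ((Nc (2*M+1) ((2*a+1 : ℕ) : ℤ) : ℤ)) =
            (((2*M+1).choose (M+1+a) : ℤ) - ((2*M+1).choose (M+1+(a+1)) : ℤ)) := by
        intro a ha
        have haM : a < M + 1 := Finset.mem_range.1 ha
        rw [Nc_form, if_pos (show 2*a+1 ≤ 2*M+1 ∧ (2*M+1 + (2*a+1)) % 2 = 0 by omega),
          show (2*M+1 + (2*a+1))/2 = M+1+a by omega, show M+1+a + 1 = M+1+(a+1) by omega]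
      have e2 : ∀ a, a ∈ Finset.range (M+1) → ((Nc (2*M+1) ((2*a : ℕ) : ℤ) : ℤ)) = 0 := by
        intro a ha
        rw [Nc_form, if_neg (show ¬(2*a ≤ 2*M+1 ∧ (2*M+1 + 2*a) % 2 = 0) by omega)]
      calc ∑ a ∈ Finset.range (M+1), ((Nc (2*M+1) ((2*a : ℕ) : ℤ) : ℤ)
              + (Nc (2*M+1) ((2*a+1 : ℕ) : ℤ) : ℤ))
          = ∑ a ∈ Finset.range (M+1),
              (((2*M+1).choose (M+1+a) : ℤ) - ((2*M+1).choose (M+1+(a+1)) : ℤ)) := by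
            refine Finset.sum_congr rfl fun a ha => ?_
            rw [e2 a ha, e1 a ha, zero_add]
        _ = ((2*M+1).choose (M+1+0) : ℤ) - ((2*M+1).choose (M+1+(M+1)) : ℤ) :=
            tele (fun a => ((2*M+1).choose (M+1+a) : ℤ)) (M+1)
        _ = ((2*M+1).choose ((2*M+1+1)/2) : ℤ) := by
            rw [show M+1+(M+1) = 2*M+1+1 by omega, Nat.choose_succ_self,
              show M+1+0 = (2*M+1+1)/2 by omega]
            simp
  exact_mod_cast main

lemma mulnom (a b c d : ℕ) :
    (a+b+c+d).choose (a+b) * ((a+b).choose a * (c+d).choose c)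
      * (a.factorial * b.factorial * c.factorial * d.factorial)
      = (a+b+c+d).factorial := by
  have h1 := Nat.choose_mul_factorial_mul_factorial (show a ≤ a + b by omega)
  have h2 := Nat.choose_mul_factorial_mul_factorial (show c ≤ c + d by omega)
  have h3 := Nat.choose_mul_factorial_mul_factorial (show a+b ≤ a+b+c+d by omega)
  rw [show a+b-a = b by omega] at h1
  rw [show c+d-c = d by omega] at h2
  rw [show a+b+c+d-(a+b) = c+d by omega] at h3
  calc (a+b+c+d).choose (a+b) * ((a+b).choose a * (c+d).choose c)
        * (a.factorial * b.factorial * c.factorial * d.factorial)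
      = (a+b+c+d).choose (a+b) * (((a+b).choose a * a.factorial * b.factorial)
          * ((c+d).choose c * c.factorial * d.factorial)) := by ring
    _ = (a+b+c+d).choose (a+b) * ((a+b).factorial * (c+d).factorial) := by rw [h1, h2]
    _ = (a+b+c+d).choose (a+b) * (a+b).factorial * (c+d).factorial := by ring
    _ = (a+b+c+d).factorial := h3

lemma binom3_eq (a b c d a' b' c' d' : ℕ)
    (h : a'+b'+c'+d' = a+b+c+d)
    (hK : a.factorial * b.factorial * c.factorial * d.factorial
        = a'.factorial * b'.factorial * c'.factorial * d'.factorial) :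
    (a+b+c+d).choose (a+b) * ((a+b).choose a * (c+d).choose c)
      = (a+b+c+d).choose (a'+b') * ((a'+b').choose a' * (c'+d').choose c') := by
  have m1 := mulnom a b c d
  have m2 := mulnom a' b' c' d'
  rw [h] at m2
  rw [hK] at m1
  have := m1.trans m2.symm
  exact Nat.eq_of_mul_eq_mul_right
    (by positivity) this

lemma EA {N a : ℕ} (ha : a ≤ N) :
    (2*N).choose (2*a) * ((2*a).choose a * (2*N-2*a).choose (N-a))
      = (2*N).choose N * (N.choose a * N.choose a) := by
  have h := binom3_eq a a (N-a) (N-a) a (N-a) a (N-a) (by omega) (by ring)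
  rw [show a+a+(N-a)+(N-a) = 2*N by omega, show a+a = 2*a by ring,
    show (N-a)+(N-a) = 2*N-2*a by omega, show a+(N-a) = N by omega] at h
  exact h

lemma EB {N a : ℕ} (ha : a < N) :
    (2*N).choose (2*a+1) * ((2*a+1).choose a * (2*N-(2*a+1)).choose (N-a-1))
      = (2*N).choose N * (N.choose a * N.choose (a+1)) := by
  have h := binom3_eq a (a+1) (N-a-1) (N-a) a (N-a) (a+1) (N-a-1) (by omega) (by ring)
  rw [show a+(a+1)+(N-a-1)+(N-a) = 2*N by omega, show a+(a+1) = 2*a+1 by ring,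
    show (N-a-1)+(N-a) = 2*N-(2*a+1) by omega, show a+(N-a) = N by omega,
    show (a+1)+(N-a-1) = N by omega] at h
  exact h

lemma OA {N a : ℕ} (ha : a ≤ N) :
    (2*N+1).choose (2*a) * ((2*a).choose a * (2*N+1-2*a).choose (N-a))
      = (2*N+1).choose N * (N.choose a * (N+1).choose a) := by
  have h := binom3_eq a a (N-a) (N+1-a) a (N-a) a (N+1-a) (by omega) (by ring)
  rw [show a+a+(N-a)+(N+1-a) = 2*N+1 by omega, show a+a = 2*a by ring,
    show (N-a)+(N+1-a) = 2*N+1-2*a by omega, show a+(N-a) = N by omega,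
    show a+(N+1-a) = N+1 by omega] at h
  exact h

lemma OB {N a : ℕ} (ha : a ≤ N) :
    (2*N+1).choose (2*a+1) * ((2*a+1).choose a * (2*N-2*a).choose (N-a))
      = (2*N+1).choose N * (N.choose a * (N+1).choose (a+1)) := by
  have h := binom3_eq a (a+1) (N-a) (N-a) a (N-a) (a+1) (N-a) (by omega) (by ring)
  rw [show a+(a+1)+(N-a)+(N-a) = 2*N+1 by omega, show a+(a+1) = 2*a+1 by ring,
    show (N-a)+(N-a) = 2*N-2*a by omega, show a+(N-a) = N by omega,
    show (a+1)+(N-a) = N+1 by omega] at h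
  exact h

lemma V1 (N : ℕ) : ∑ a ∈ Finset.range (N+1), N.choose a * N.choose a = (2*N).choose N := by
  rw [show 2*N = N+N by ring, Nat.add_choose_eq, Finset.Nat.sum_antidiagonal_eq_sum_range_succ_mk]
  exact Finset.sum_congr rfl fun k hk => by
    rw [Nat.choose_symm (by simp at hk; omega)]

lemma V2 (N : ℕ) : ∑ a ∈ Finset.range (N+1), N.choose a * N.choose (a+1) = (2*N).choose (N+1) := by
  rw [show 2*N = N+N by ring, Nat.add_choose_eq, Finset.Nat.sum_antidiagonal_eq_sum_range_succ_mk]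
  rw [Finset.sum_range_succ' (fun k => N.choose k * N.choose (N+1-k)) (N+1)]
  rw [Nat.choose_zero_right, show N+1-0 = N+1 by omega, Nat.choose_succ_self]
  simp only [Nat.succ_sub_succ_eq_sub, mul_zero, one_mul, add_zero]
  refine Finset.sum_congr rfl fun i hi => ?_
  rw [Nat.choose_symm (by simp at hi; omega), mul_comm]

lemma V3 (N : ℕ) : ∑ a ∈ Finset.range (N+1), N.choose a * (N+1).choose a
    = (2*N+1).choose (N+1) := by
  rw [show 2*N+1 = N+(N+1) by ring, Nat.add_choose_eq,
    Finset.Nat.sum_antidiagonal_eq_sum_range_succ_mk]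
  conv_rhs => rw [Finset.sum_range_succ]
  have hlast : N.choose ((N+1 : ℕ), (N+1-(N+1) : ℕ)).1 * (N+1).choose ((N+1 : ℕ), (N+1-(N+1) : ℕ)).2 = 0 := by
    simp [Nat.choose_succ_self]
  rw [hlast, add_zero]
  refine Finset.sum_congr rfl fun k hk => ?_
  congr 1
  rw [← Nat.choose_symm (show k ≤ N+1 by simp at hk; omega)]

lemma V4 (N : ℕ) : ∑ a ∈ Finset.range (N+1), N.choose a * (N+1).choose (a+1)
    = (2*N+1).choose N := by
  rw [show 2*N+1 = N+(N+1) by ring, Nat.add_choose_eq,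
    Finset.Nat.sum_antidiagonal_eq_sum_range_succ_mk]
  refine Finset.sum_congr rfl fun k hk => ?_
  congr 1
  rw [← Nat.choose_symm (show k+1 ≤ N+1 by simp at hk; omega)]
  congr 1
  simp at hk
  omega

lemma b1_closed' (m : ℕ) : b1 m = m.choose (m/2) := by
  rw [b1_closed]
  conv_rhs => rw [show m/2 = m - (m+1)/2 by omega]
  exact (Nat.choose_symm (by omega)).symm

lemma key (n : ℕ) :
    ∑ m ∈ Finset.range (n+1), n.choose m * (m.choose (m/2) * (n-m).choose ((n-m)/2))
      = n.choose (n/2) * (n+1).choose ((n+1)/2) := by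
  rcases Nat.even_or_odd n with hE | hO
  · obtain ⟨N, h2⟩ : ∃ N, n = 2*N := by rcases hE with ⟨r, hr⟩; exact ⟨r, by omega⟩
    subst h2
    rw [Finset.sum_range_succ, sum_range_even_odd]
    calc (∑ a ∈ Finset.range N,
            ((2*N).choose (2*a) * ((2*a).choose ((2*a)/2) * (2*N-2*a).choose ((2*N-2*a)/2))
              + (2*N).choose (2*a+1)
                * ((2*a+1).choose ((2*a+1)/2) * (2*N-(2*a+1)).choose ((2*N-(2*a+1))/2))))
          + (2*N).choose (2*N) * ((2*N).choose ((2*N)/2) * (2*N-2*N).choose ((2*N-2*N)/2))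
        = (∑ a ∈ Finset.range N, ((2*N).choose N * (N.choose a * N.choose a)
            + (2*N).choose N * (N.choose a * N.choose (a+1))))
          + (2*N).choose N * (N.choose N * N.choose N) := by
          refine congrArg₂ (· + ·) (Finset.sum_congr rfl fun a ha => ?_) ?_
          · have haN : a < N := Finset.mem_range.1 ha
            rw [show (2*a)/2 = a by omega, show (2*N-2*a)/2 = N-a by omega,
              show (2*a+1)/2 = a by omega, show (2*N-(2*a+1))/2 = N-a-1 by omega,
              EA (by omega), EB haN]
          · rw [show (2*N)/2 = N by omega, show 2*N-2*N = 0 by omega]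
            simp [Nat.choose_self]
      _ = (2*N).choose N * ((∑ a ∈ Finset.range (N+1), N.choose a * N.choose a)
            + ∑ a ∈ Finset.range (N+1), N.choose a * N.choose (a+1)) := by
          rw [Finset.sum_add_distrib, ← Finset.mul_sum, ← Finset.mul_sum]
          rw [Finset.sum_range_succ (fun a => N.choose a * N.choose a) N]
          rw [Finset.sum_range_succ (fun a => N.choose a * N.choose (a+1)) N,
            Nat.choose_succ_self, mul_zero, add_zero]
          ring
      _ = (2*N).choose N * ((2*N).choose N + (2*N).choose (N+1)) := by rw [V1, V2]
      _ = (2*N).choose ((2*N)/2) * (2*N+1).choose ((2*N+1)/2) := by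
          rw [← Nat.choose_succ_succ, show (2*N)/2 = N by omega,
            show (2*N+1)/2 = N by omega]
          congr 1
          rw [show N.succ = 2*N+1-N by omega]
          exact Nat.choose_symm (by omega)
  · obtain ⟨N, h2⟩ : ∃ N, n = 2*N+1 := by rcases hO with ⟨r, hr⟩; exact ⟨r, by omega⟩
    subst h2
    rw [show 2*N+1+1 = 2*(N+1) by omega, sum_range_even_odd]
    calc ∑ a ∈ Finset.range (N+1),
            ((2*N+1).choose (2*a) * ((2*a).choose ((2*a)/2) * (2*N+1-2*a).choose ((2*N+1-2*a)/2))
              + (2*N+1).choose (2*a+1)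
                * ((2*a+1).choose ((2*a+1)/2) * (2*N+1-(2*a+1)).choose ((2*N+1-(2*a+1))/2)))
        = ∑ a ∈ Finset.range (N+1), ((2*N+1).choose N * (N.choose a * (N+1).choose a)
            + (2*N+1).choose N * (N.choose a * (N+1).choose (a+1))) := by
          refine Finset.sum_congr rfl fun a ha => ?_
          have haN : a ≤ N := by have := Finset.mem_range.1 ha; omega
          rw [show (2*a)/2 = a by omega, show (2*N+1-2*a)/2 = N-a by omega,
            show (2*a+1)/2 = a by omega, show 2*N+1-(2*a+1) = 2*N-2*a by omega,
            show (2*N-2*a)/2 = N-a by omega, OA haN, OB haN]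
      _ = (2*N+1).choose N * ((∑ a ∈ Finset.range (N+1), N.choose a * (N+1).choose a)
            + ∑ a ∈ Finset.range (N+1), N.choose a * (N+1).choose (a+1)) := by
          rw [Finset.sum_add_distrib, ← Finset.mul_sum, ← Finset.mul_sum, mul_add]
      _ = (2*N+1).choose N * ((2*N+1).choose (N+1) + (2*N+1).choose N) := by rw [V3, V4]
      _ = (2*N+1).choose ((2*N+1)/2) * (2*(N+1)).choose ((2*(N+1))/2) := by
          rw [add_comm ((2*N+1).choose (N+1)), ← Nat.choose_succ_succ,
            show (2*N+1)/2 = N by omega, show (2*(N+1))/2 = N+1 by omega,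
            show (2*N+1).succ = 2*(N+1) by omega]

def decode (d : ℤ × ℤ) : Fin 4 :=
  if d = (1,0) then 0 else if d = (-1,0) then 1 else if d = (0,1) then 2 else 3

lemma decode_stepv (t : Fin 4) : decode (stepv t) = t := by
  fin_cases t <;> norm_num [decode, stepv, Prod.ext_iff] <;> decide

lemma stepv_decode {d : ℤ × ℤ}
    (hd : d ∈ ({(1,0), (-1,0), (0,1), (0,-1)} : Set (ℤ × ℤ))) : stepv (decode d) = d := by
  simp only [Set.mem_insert_iff, Set.mem_singleton_iff] at hd
  rcases hd with rfl | rfl | rfl | rfl <;> norm_num [decode, stepv, Prod.ext_iff] <;> constructor <;> rfl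

lemma stepv_mem (t : Fin 4) :
    stepv t ∈ ({(1,0), (-1,0), (0,1), (0,-1)} : Set (ℤ × ℤ)) := by
  fin_cases t <;> simp [stepv]

lemma psum2_eq_walk {n : ℕ} (w : Fin (n+1) → ℤ × ℤ) (h0 : w 0 = (0,0))
    (hs : ∀ k : Fin n, stepv (decode (w k.succ - w k.castSucc)) = w k.succ - w k.castSucc) :
    ∀ j (hj : j ≤ n),
      psum2 (fun k => decode (w k.succ - w k.castSucc)) j = w ⟨j, by omega⟩ := by
  intro j
  induction j with
  | zero =>
    intro hj
    rw [psum2_zero, show (⟨0, by omega⟩ : Fin (n+1)) = 0 from rfl, h0]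
    rfl
  | succ j ih =>
    intro hj
    rw [psum2_succ _ (show j < n by omega), ih (by omega), hs ⟨j, by omega⟩]
    have e1 : (⟨j, show j < n by omega⟩ : Fin n).succ = ⟨j+1, by omega⟩ := rfl
    have e2 : (⟨j, show j < n by omega⟩ : Fin n).castSucc = ⟨j, by omega⟩ := rfl
    rw [e1, e2]
    ring

def walkEquiv (n : ℕ) :
    {w : Fin (n + 1) → ℤ × ℤ //
      w 0 = (0, 0) ∧
      (∀ k : Fin n, w k.succ - w k.castSucc ∈
        ({(1, 0), (-1, 0), (0, 1), (0, -1)} : Set (ℤ × ℤ))) ∧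
      ∀ k, 0 ≤ (w k).1 ∧ 0 ≤ (w k).2} ≃ {s : Fin n → Fin 4 // good2 s} where
  toFun w := ⟨fun k => decode (w.1 k.succ - w.1 k.castSucc), by
    intro j hj
    have hs : ∀ k : Fin n, stepv (decode (w.1 k.succ - w.1 k.castSucc))
        = w.1 k.succ - w.1 k.castSucc := fun k => stepv_decode (w.2.2.1 k)
    rw [psum2_eq_walk w.1 w.2.1 hs j hj]
    exact w.2.2.2 ⟨j, by omega⟩⟩
  invFun s := ⟨fun k => psum2 s.1 (k : ℕ), by
    refine ⟨by simp; rfl, fun k => ?_, fun k => s.2 k (by omega)⟩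
    have h : psum2 s.1 ((k.succ : Fin (n+1)) : ℕ) - psum2 s.1 ((k.castSucc : Fin (n+1)) : ℕ)
        = stepv (s.1 k) := by
      rw [Fin.val_succ, Fin.coe_castSucc, psum2_succ s.1 k.isLt]
      simp [Fin.eta]
    rw [h]
    exact stepv_mem _⟩
  left_inv w := Subtype.ext (funext fun k => by
    have hs : ∀ k : Fin n, stepv (decode (w.1 k.succ - w.1 k.castSucc))
        = w.1 k.succ - w.1 k.castSucc := fun k => stepv_decode (w.2.2.1 k)
    have := psum2_eq_walk w.1 w.2.1 hs (k : ℕ) (by omega)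
    simp only [Fin.eta] at this
    exact this)
  right_inv s := Subtype.ext (funext fun k => by
    show decode (psum2 s.1 ((k.succ : Fin (n+1)) : ℕ)
      - psum2 s.1 ((k.castSucc : Fin (n+1)) : ℕ)) = s.1 k
    rw [Fin.val_succ, Fin.coe_castSucc, psum2_succ s.1 k.isLt, add_sub_cancel_left,
      Fin.eta, decode_stepv])

end SQW

/-- The number of `n`-step quadrant walks on the square lattice starting at the origin is
`C(n, ⌊n/2⌋) C(n+1, ⌈n/2⌉) = ∑_m C(n, m) C(m, ⌊m/2⌋) C(n−m, ⌊(n−m)/2⌋)`. -/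
theorem squareQuadrantCount_eq (n : ℕ) :
    squareQuadrantCount n = Nat.choose n (n / 2) * Nat.choose (n + 1) ((n + 1) / 2) ∧
    squareQuadrantCount n = ∑ m ∈ Finset.range (n + 1),
      Nat.choose n m * Nat.choose m (m / 2) * Nat.choose (n - m) ((n - m) / 2) := by
  have h1 : squareQuadrantCount n = SQW.Tot n := Nat.card_congr (SQW.walkEquiv n)
  have h2 : squareQuadrantCount n = ∑ m ∈ Finset.range (n + 1),
      n.choose m * (m.choose (m / 2) * (n - m).choose ((n - m) / 2)) := by
    rw [h1, SQW.Tot_conv]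
    exact Finset.sum_congr rfl fun m _ => by rw [SQW.b1_closed', SQW.b1_closed']
  refine ⟨?_, ?_⟩
  · rw [h2, SQW.key]
  · rw [h2]
    exact Finset.sum_congr rfl fun m _ => by ring
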